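/- For all complex w with Re w ≥ 1 and all positive integers n, |w^(n+1) - 1| ≥ |w|^n · |w - 1|. -/

import Mathlib

open Real

private lemma quart (x : ℝ) (h0 : 0 ≤ x) (h3 : x ≤ Real.pi / 3) :
    (43/100) * x ^ 2 ≤ 1 - Real.cos x := by
  rcases h0.eq_or_lt with h | h
  · simp [← h]
  · have hpi : Real.pi < 3.1416 := Real.pi_lt_d4
    have hu : x / 2 ≤ 131 / 250 := by linarith
    have hu1 : x / 2 ≤ 1 := by linarith
    have hu0 : 0 < x / 2 := by linarith
    have hs : x / 2 - (x / 2) ^ 3 / 4 < Real.sin (x / 2) := by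
      have := Real.sin_gt_sub_cube hu0
      nlinarith [pow_pos hu0 3]
    have hq : (x / 2) ^ 2 ≤ 17161 / 62500 := by nlinarith
    have hL0 : 0 < x / 2 - (x / 2) ^ 3 / 4 := by nlinarith
    have hs2 : (x / 2 - (x / 2) ^ 3 / 4) ^ 2 ≤ Real.sin (x / 2) ^ 2 := by nlinarith
    have hcos : Real.cos x = 1 - 2 * Real.sin (x / 2) ^ 2 := by
      have h2 := Real.cos_two_mul (x / 2)
      have h3' := Real.sin_sq_add_cos_sq (x / 2)
      rw [show 2 * (x / 2) = x by ring] at h2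
      linarith
    have hL2 : (43/50) * (x/2) ^ 2 ≤ (x / 2 - (x / 2) ^ 3 / 4) ^ 2 := by
      nlinarith [mul_nonneg (sq_nonneg (x/2)) (by linarith : (0:ℝ) ≤ 7/50 - (x/2)^2/2),
        sq_nonneg ((x/2)^3), sq_nonneg (x/2)]
    nlinarith [hs2, hcos, hL2]


private lemma lemA (R y phi psi cphi cpsi : ℝ) (hR1 : 1 ≤ R) (hR2 : R < 2) (hy1 : 1 ≤ y)
    (hyR : y < 2 * R) (hphi0 : 0 ≤ phi) (h3phi : 3 * phi ≤ psi)
    (hq : (43/100) * psi ^ 2 ≤ 1 - cpsi) (hcphiq : 1 - phi ^ 2 / 2 ≤ cphi) (hcphi1 : cphi ≤ 1) :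
    2 * (y * R * cpsi) ≤ (2 * (R * cphi) - 1) * y ^ 2 + 1 := by
  have hpsi2 : (3 * phi) ^ 2 ≤ psi ^ 2 := pow_le_pow_left₀ (by positivity) h3phi 2
  have hq9 : (387/100) * phi ^ 2 ≤ 1 - cpsi := by nlinarith [hpsi2, hq]
  have hy4 : y ≤ 4 := by linarith
  have hF1 : 0 ≤ (y - 1) * (2 * R * y - y - 1) := by
    apply mul_nonneg (by linarith)
    nlinarith
  have hM2 : y * (1 - cphi) ≤ 2 * phi ^ 2 := by
    nlinarith [mul_nonneg (by linarith : (0:ℝ) ≤ 4 - y) (by linarith : (0:ℝ) ≤ 1 - cphi)]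
  have hRy0 : (0 : ℝ) ≤ 2 * R * y := by positivity
  have hP1 : 2 * R * y * ((387/100) * phi ^ 2) ≤ 2 * R * y * (1 - cpsi) :=
    mul_le_mul_of_nonneg_left hq9 hRy0
  have hP2 : 2 * R * y * (y * (1 - cphi)) ≤ 2 * R * y * (2 * phi ^ 2) :=
    mul_le_mul_of_nonneg_left hM2 hRy0
  have hP3 : (0 : ℝ) ≤ R * y * phi ^ 2 := by positivity
  nlinarith [hF1, hP1, hP2, hP3]

private lemma sand (R c : ℝ) (hR1 : 1 ≤ R) (hc1 : c ≤ 1) (h1 : 1 ≤ R * c) :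
    1 - c ≤ R - 1 := by nlinarith [mul_nonneg (by linarith : (0:ℝ) ≤ R - 1) (by linarith : (0:ℝ) ≤ 1 - c)]

private lemma lemB (N R y phi : ℝ) (hN : 5 ≤ N) (hR2 : R < 2) (hRgt1 : 1 < R)
    (hyR : y < 2 * R) (hcase : y ^ 2 + 1 < 2 * (y * R)) (hbern : 1 + N * (R - 1) ≤ y)
    (hRlb : (43/100) * phi ^ 2 ≤ R - 1) (hphilb : 5 * Real.pi < 3 * ((N + 1) * phi))
    (hphi0 : 0 ≤ phi) : False := by
  have hNpos : (0:ℝ) < N := by linarith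
  have e1 : (N * (R - 1)) ^ 2 ≤ (y - 1) ^ 2 := by
    apply pow_le_pow_left₀ (by nlinarith) (by linarith) 2
  have e2 : (y - 1) ^ 2 < 8 * (R - 1) := by
    nlinarith [mul_pos (by linarith : (0:ℝ) < 2 * R - y) (by linarith : (0:ℝ) < R - 1),
      mul_pos (by linarith : (0:ℝ) < 2 - R) (by linarith : (0:ℝ) < R - 1)]
  have h8 : N ^ 2 * (R - 1) < 8 := by
    have hpos : (0 : ℝ) < R - 1 := by linarith
    have hm : (N ^ 2 * (R - 1)) * (R - 1) < 8 * (R - 1) := by nlinarith [e1, e2]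
    exact lt_of_mul_lt_mul_right hm (le_of_lt hpos)
  have hsq : (5 * Real.pi) * (5 * Real.pi) < (3 * ((N + 1) * phi)) * (3 * ((N + 1) * phi)) :=
    mul_self_lt_mul_self (by positivity) hphilb
  have hB : 25 * Real.pi ^ 2 < 9 * (N + 1) ^ 2 * phi ^ 2 := by nlinarith [hsq]
  have hA : (43/100) * (N ^ 2 * phi ^ 2) < 8 := by
    nlinarith [mul_le_mul_of_nonneg_left hRlb (sq_nonneg N), h8]
  have hN2 : (0:ℝ) < N ^ 2 := by positivity
  have hC := mul_lt_mul_of_pos_left hB hN2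
  have hD : N ^ 2 * phi ^ 2 < 800/43 := by linarith
  have hE := mul_lt_mul_of_pos_left hD (show (0:ℝ) < 9 * (N + 1) ^ 2 by positivity)
  nlinarith [hC, hE, Real.pi_gt_d6, hN, sq_nonneg (Real.pi - 3.141592), sq_nonneg (N - 5)]

private lemma pow_re_polar (w : ℂ) (m : ℕ) :
    (w ^ m).re = ‖w‖ ^ m * Real.cos (m * Complex.arg w) := by
  conv_lhs => rw [← Complex.norm_mul_exp_arg_mul_I w]
  rw [mul_pow, ← Complex.exp_nat_mul, ← Complex.ofReal_pow,
    show ((m : ℂ) * (↑(Complex.arg w) * Complex.I)) = ↑((m : ℝ) * Complex.arg w) * Complex.I by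
      push_cast; ring,
    Complex.re_ofReal_mul, Complex.exp_ofReal_mul_I_re]

private lemma keyG (w : ℂ) (hw : 1 ≤ w.re) (n : ℕ) (hn : 1 ≤ n) :
    2 * (w ^ (n + 1)).re ≤ (2 * w.re - 1) * ‖w‖ ^ (2 * n) + 1 := by
  have hR1 : 1 ≤ ‖w‖ := le_trans hw (Complex.re_le_norm w)
  have hR0 : (0 : ℝ) < ‖w‖ := by linarith
  have hw0 : w ≠ 0 := by
    intro h; rw [h] at hw; simp at hw; linarith
  rcases Nat.lt_or_ge n 2 with h2n | h2n
  · -- n = 1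
    have hn1 : n = 1 := by omega
    subst hn1
    have hre2 : (w ^ 2).re = w.re * w.re - w.im * w.im := by
      rw [pow_two, Complex.mul_re]
    have hab : ‖w‖ ^ 2 = w.re * w.re + w.im * w.im := by
      rw [Complex.sq_norm, Complex.normSq_apply]
    norm_num [hre2, hab]
    nlinarith [sq_nonneg (w.re - 1), sq_nonneg w.im, hw]
  · -- n ≥ 2
    set R := ‖w‖ with hRdef
    set y := R ^ n with hydef
    have hy2 : R ^ (2 * n) = y ^ 2 := by rw [hydef, ← pow_mul, mul_comm]
    have hy1e : R ^ (n + 1) = y * R := by rw [hydef, pow_succ]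
    have hy1 : 1 ≤ y := one_le_pow₀ hR1
    by_cases h1 : 2 * R ^ (n + 1) ≤ R ^ (2 * n) + 1
    · have hXle : (w ^ (n + 1)).re ≤ R ^ (n + 1) := by
        calc (w ^ (n + 1)).re ≤ ‖w ^ (n + 1)‖ := Complex.re_le_norm _
        _ = R ^ (n + 1) := by rw [norm_pow]
      nlinarith [hXle, h1, mul_nonneg (by linarith : (0:ℝ) ≤ 2 * w.re - 2)
        (pow_nonneg (by linarith : (0:ℝ) ≤ R) (2 * n))]
    · push_neg at h1
      rw [hy2, hy1e] at h1
      have hyR : y < 2 * R := by nlinarith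
      have hR2y : R ^ 2 ≤ y := by
        rw [hydef]; exact pow_le_pow_right₀ hR1 h2n
      have hR2 : R < 2 := by nlinarith
      have hRgt1 : 1 < R := by nlinarith
      by_cases h2 : (w ^ (n + 1)).re ≤ y
      · rw [hy2]
        nlinarith [h2, sq_nonneg (y - 1), mul_nonneg (by linarith : (0:ℝ) ≤ 2 * w.re - 2)
          (sq_nonneg y)]
      · push_neg at h2
        set θ := Complex.arg w with hθdef
        set φ := |θ| with hφdef
        have hφ0 : 0 ≤ φ := abs_nonneg θ
        have hφπ : φ ≤ Real.pi := Complex.abs_arg_le_pi w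
        have hre : (w ^ (n + 1)).re = (y * R) * Real.cos (((n : ℝ) + 1) * φ) := by
          rw [pow_re_polar w (n + 1), hy1e]
          congr 1
          have habs : ((n + 1 : ℕ) : ℝ) * θ = ((n : ℝ) + 1) * θ := by push_cast; ring
          rw [habs]
          rcases abs_choice θ with h | h
          · rw [hφdef, h]
          · rw [hφdef, h, mul_neg, Real.cos_neg]
        set ψ := ((n : ℝ) + 1) * φ with hψdef
        have hψ0 : 0 ≤ ψ := by positivity
        have hcosφe : Real.cos φ = w.re / R := by
          rw [hφdef, Real.cos_abs]; exact Complex.cos_arg hw0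
        have ha : w.re = R * Real.cos φ := by
          rw [hcosφe]; field_simp
        have h1Rφ : 1 ≤ R * Real.cos φ := by rw [← ha]; exact hw
        have hcosφ12 : 1 / 2 < Real.cos φ := by
          by_contra hc
          push_neg at hc
          have hm : R * Real.cos φ ≤ R * (1 / 2) := mul_le_mul_of_nonneg_left hc (le_of_lt hR0)
          linarith
        have hφ3 : φ < Real.pi / 3 := by
          by_contra hcon
          push_neg at hcon
          have := Real.cos_le_cos_of_nonneg_of_le_pi (by positivity) hφπ hcon
          rw [Real.cos_pi_div_three] at this
          linarith
        have hRcψ : 1 < R * Real.cos ψ := by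
          have h2' : y < y * (R * Real.cos ψ) := by
            rw [← mul_assoc, ← hre]; exact h2
          have hy0 : (0:ℝ) < y := by linarith
          have := (mul_lt_mul_iff_right₀ hy0).mp (by linarith [h2'] : y * 1 < y * (R * Real.cos ψ))
          linarith
        have hcosψ12 : 1 / 2 < Real.cos ψ := by
          by_contra hc
          push_neg at hc
          have hm : R * Real.cos ψ ≤ R * (1 / 2) := mul_le_mul_of_nonneg_left hc (le_of_lt hR0)
          linarith
        by_cases hψ3 : ψ < Real.pi / 3
        · -- Branch A: all angles small
          have hq := quart ψ hψ0 (le_of_lt hψ3)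
          have h3n : (3 : ℝ) ≤ (n : ℝ) + 1 := by
            have : (2 : ℝ) ≤ (n : ℝ) := by exact_mod_cast h2n
            linarith
          have h3φ : 3 * φ ≤ ψ := by
            rw [hψdef]
            exact mul_le_mul_of_nonneg_right h3n hφ0
          have hcφq : 1 - φ ^ 2 / 2 ≤ Real.cos φ := Real.one_sub_sq_div_two_le_cos
          have hBA := lemA R y φ ψ (Real.cos φ) (Real.cos ψ) hR1 hR2 hy1 hyR hφ0 h3φ hq hcφq
            (Real.cos_le_one φ)
          rw [hre, hy2, ha]
          linarith only [hBA]
        · -- Branch B: ψ ≥ π/3, show contradiction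
          exfalso
          push_neg at hψ3
          have hψgt : 5 * Real.pi / 3 < ψ := by
            by_contra hle
            push_neg at hle
            have hc12 : Real.cos ψ ≤ 1 / 2 := by
              rcases le_or_gt ψ Real.pi with hh | hh
              · have := Real.cos_le_cos_of_nonneg_of_le_pi
                  (by positivity : (0:ℝ) ≤ Real.pi / 3) hh hψ3
                rwa [Real.cos_pi_div_three] at this
              · have hrw : Real.cos (2 * Real.pi - ψ) = Real.cos ψ := Real.cos_two_pi_sub ψ
                have := Real.cos_le_cos_of_nonneg_of_le_pi
                  (by positivity : (0:ℝ) ≤ Real.pi / 3)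
                  (show 2 * Real.pi - ψ ≤ Real.pi by linarith)
                  (show Real.pi / 3 ≤ 2 * Real.pi - ψ by linarith)
                rw [hrw, Real.cos_pi_div_three] at this
                linarith
            linarith
          rcases le_or_gt n 4 with h4 | h5
          · have hn5 : (n : ℝ) + 1 ≤ 5 := by
              have : (n : ℝ) ≤ 4 := by exact_mod_cast h4
              linarith
            have h5φ : ψ ≤ 5 * φ := by
              rw [hψdef]
              exact mul_le_mul_of_nonneg_right hn5 hφ0
            linarith only [hψgt, h5φ, hφ3, Real.pi_gt_three]
          · have h5n : (5 : ℝ) ≤ (n : ℝ) := by exact_mod_cast h5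
            have hquart := quart φ hφ0 (le_of_lt hφ3)
            have hsand : 1 - Real.cos φ ≤ R - 1 := sand R (Real.cos φ) hR1 (Real.cos_le_one φ) h1Rφ
            have hbern : 1 + (n : ℝ) * (R - 1) ≤ y := by
              have := one_add_mul_le_pow (show (-2:ℝ) ≤ R - 1 by linarith) n
              rw [show (1:ℝ) + (R - 1) = R by ring] at this
              exact this
            have hRlb : (43/100) * φ ^ 2 ≤ R - 1 := by linarith only [hquart, hsand]
            have hφlb : 5 * Real.pi < 3 * (((n : ℝ) + 1) * φ) := by
              rw [← hψdef]; linarith only [hψgt]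
            exact lemB ((n : ℝ)) R y φ h5n hR2 hRgt1 hyR h1 hbern hRlb hφlb hφ0

theorem stmt3 (w : ℂ) (hw : 1 ≤ w.re) (n : ℕ) (hn : 0 < n) :
    ‖w‖ ^ n * ‖w - 1‖ ≤ ‖w ^ (n + 1) - 1‖ := by
  have hG := keyG w hw n hn
  set R := ‖w‖ with hRdef
  have hR1 : 1 ≤ R := le_trans hw (Complex.re_le_norm w)
  set X := w ^ (n + 1) with hXdef
  have hX : X.re * X.re + X.im * X.im = (R ^ (n + 1)) ^ 2 := by
    rw [← Complex.normSq_apply, ← Complex.sq_norm, hXdef, norm_pow]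
  have hRsq : R ^ 2 = w.re * w.re + w.im * w.im := by
    rw [hRdef, Complex.sq_norm, Complex.normSq_apply]
  have hw1sq : ‖w - 1‖ ^ 2 = (w.re - 1) * (w.re - 1) + w.im * w.im := by
    rw [Complex.sq_norm, Complex.normSq_apply, Complex.sub_re, Complex.sub_im,
      Complex.one_re, Complex.one_im]
    ring
  have hX1sq : ‖X - 1‖ ^ 2 = (X.re - 1) * (X.re - 1) + X.im * X.im := by
    rw [Complex.sq_norm, Complex.normSq_apply, Complex.sub_re, Complex.sub_im,
      Complex.one_re, Complex.one_im]
    ring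
  have hGy : 2 * X.re ≤ (2 * w.re - 1) * (R ^ n) ^ 2 + 1 := by
    rw [hXdef]
    calc 2 * (w ^ (n + 1)).re ≤ (2 * w.re - 1) * R ^ (2 * n) + 1 := hG
    _ = (2 * w.re - 1) * (R ^ n) ^ 2 + 1 := by rw [← pow_mul, mul_comm 2 n]
  have hkey : (R ^ n * ‖w - 1‖) ^ 2 ≤ ‖X - 1‖ ^ 2 := by
    rw [mul_pow, hw1sq, hX1sq]
    have hpow : (R ^ n) ^ 2 * R ^ 2 = (R ^ (n + 1)) ^ 2 := by ring
    nlinarith [hGy, hX, hRsq, hpow, sq_nonneg (R ^ n)]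
  calc R ^ n * ‖w - 1‖
      = Real.sqrt ((R ^ n * ‖w - 1‖) ^ 2) := by
        rw [Real.sqrt_sq (by positivity)]
    _ ≤ Real.sqrt (‖X - 1‖ ^ 2) := Real.sqrt_le_sqrt hkey
    _ = ‖X - 1‖ := Real.sqrt_sq (norm_nonneg _)
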